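/- arXiv:1401.1725 — 4 statements merged into one kernel-verified Lean document; each statement's English description precedes it below -/
import Mathlib

section
/- Let 𝟎 = (0^{n₀}, 1^{n₁}, 2^{n₂}) be an identity string and let x ∈ {0,1,2} be a simple label that occurs in 𝟎. Then there exists a unique single row of matching puzzle pieces (a horizontal strip of height one made of upward and downward triangles from the eight puzzle pieces) whose left border label is x and whose bottom border labels read 𝟎 from right to left. Moreover, the right border label of this row is x, and the top border labels form the identity string obtained by removing one copy of x from 𝟎. -/
/-- The eight puzzle pieces, as clockwise triples of edge labels. -/
def puzzleBase : List (ℕ × ℕ × ℕ) :=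
  [(0,0,0),(1,1,1),(2,2,2),(3,1,0),(4,2,1),(5,2,0),(6,2,3),(7,4,0)]

/-- Cyclic rotation of a triple (rotating the triangle). -/
def rot3 (t : ℕ × ℕ × ℕ) : ℕ × ℕ × ℕ := (t.2.2, t.1, t.2.1)

/-- A triple of labels, read clockwise, is an allowed puzzle piece (rotations allowed). -/
def IsPiece (t : ℕ × ℕ × ℕ) : Prop :=
  t ∈ puzzleBase ∨ rot3 t ∈ puzzleBase ∨ rot3 (rot3 t) ∈ puzzleBase

/-- A single row of a triangular puzzle: m upward triangles with edges
(lfts j, rgts j, bots j) and m−1 downward triangles with clockwise edges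
(tops j, lfts (j+1), rgts j).  The left border edge is lfts 0 and the right
border edge is rgts (m−1). -/
def IsRow (lfts rgts tops bots : List ℕ) : Prop :=
  rgts.length = lfts.length ∧ bots.length = lfts.length ∧
  tops.length + 1 = lfts.length ∧
  (∀ j, j < lfts.length → IsPiece (lfts.getD j 8, rgts.getD j 8, bots.getD j 8)) ∧
  (∀ j, j + 1 < lfts.length → IsPiece (tops.getD j 8, lfts.getD (j+1) 8, rgts.getD j 8))

/-- The identity string (0^{n₀}, 1^{n₁}, 2^{n₂}). -/
def idString3 (n₀ n₁ n₂ : ℕ) : List ℕ :=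
  List.replicate n₀ 0 ++ List.replicate n₁ 1 ++ List.replicate n₂ 2

/- ### Auxiliary machinery -/

/-- Right edge of an upward triangle, determined by left edge and bottom edge. -/
def upR (l b : ℕ) : ℕ :=
  match b, l with
  | 0, 0 => 0 | 0, 3 => 1 | 0, 5 => 2 | 0, 7 => 4
  | 1, 1 => 1 | 1, 0 => 3 | 1, 4 => 2
  | 2, 2 => 2 | 2, 1 => 4 | 2, 0 => 5 | 2, 3 => 6
  | _, _ => 8

/-- (top, next-left) of a downward triangle, determined by its right-slanted edge `r`
and the bottom edge `b'` of the following upward triangle. -/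
def dnL (r b' : ℕ) : ℕ × ℕ :=
  match r, b' with
  | 0, _ => (0,0)
  | 1, 1 => (1,1) | 1, _ => (0,3)
  | 2, 2 => (2,2) | 2, 1 => (1,4) | 2, _ => (0,5)
  | 3, _ => (1,0)
  | 4, 0 => (0,7) | 4, _ => (2,1)
  | 5, _ => (2,0)
  | 6, _ => (2,3)
  | 7, _ => (4,0)
  | _, _ => (8,8)

instance instDecIsPiece (t : ℕ × ℕ × ℕ) : Decidable (IsPiece t) := by
  unfold IsPiece; exact inferInstance

lemma piece_lt {a b c : ℕ} (h : IsPiece (a,b,c)) : a < 8 ∧ b < 8 ∧ c < 8 := by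
  simp only [IsPiece, puzzleBase, rot3, List.mem_cons, List.not_mem_nil, or_false,
    Prod.mk.injEq] at h
  omega

lemma upR_eq_fin : ∀ (l r : Fin 8) (b : Fin 3),
    IsPiece (l.val, r.val, b.val) → r.val = upR l.val b.val := by decide

/-- The possible (bottom, right) pairs of an upward triangle. -/
def okBR : List (ℕ × ℕ) :=
  [(0,0),(0,1),(0,2),(0,4),(1,1),(1,2),(1,3),(2,2),(2,4),(2,5),(2,6)]

lemma ok_fin : ∀ (l : Fin 8) (b : Fin 3),
    IsPiece (l.val, upR l.val b.val, b.val) → (b.val, upR l.val b.val) ∈ okBR := by decide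

lemma dn_eq_fin : ∀ (t l' r : Fin 8) (b b' : Fin 3), (b.val, r.val) ∈ okBR →
    b'.val ≤ b.val → upR l'.val b'.val ≠ 8 → IsPiece (t.val, l'.val, r.val) →
    (t.val, l'.val) = dnL r.val b'.val := by decide

lemma upR_eq {l r b : ℕ} (h : IsPiece (l, r, b)) (hb : b ≤ 2) : r = upR l b := by
  obtain ⟨h1, h2, _⟩ := piece_lt h
  exact upR_eq_fin ⟨l, h1⟩ ⟨r, h2⟩ ⟨b, by omega⟩ h

lemma dn_eq {l t l' r' b b' : ℕ} (hb : b ≤ 2) (hbb : b' ≤ b)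
    (h1 : IsPiece (l, upR l b, b)) (h2 : IsPiece (t, l', upR l b))
    (h3 : IsPiece (l', r', b')) : (t, l') = dnL (upR l b) b' := by
  obtain ⟨hl, hr, _⟩ := piece_lt h1
  obtain ⟨ht, hl', _⟩ := piece_lt h2
  obtain ⟨_, hr', _⟩ := piece_lt h3
  have hok := ok_fin ⟨l, hl⟩ ⟨b, by omega⟩ h1
  have hne : upR l' b' ≠ 8 := by
    have := upR_eq h3 (by omega)
    omega
  exact dn_eq_fin ⟨t, ht⟩ ⟨l', hl'⟩ ⟨upR l b, hr⟩ ⟨b, by omega⟩ ⟨b', by omega⟩ hok hbb hne h2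

lemma getD_rep (a v j d : ℕ) :
    (List.replicate a v).getD j d = if j < a then v else d := by
  split_ifs with h
  · rw [List.getD_eq_getElem _ _ (by simpa using h)]
    simp
  · exact List.getD_eq_default _ _ (by simpa using h)

lemma getD_rep_app (a v : ℕ) (l : List ℕ) (j d : ℕ) :
    (List.replicate a v ++ l).getD j d = if j < a then v else l.getD (j - a) d := by
  split_ifs with h
  · rw [List.getD_append _ _ _ _ (by simpa using h), getD_rep, if_pos h]
  · rw [List.getD_append_right _ _ _ _ (by simpa using h)]
    simp

lemma list_eq_of_getD {l₁ l₂ : List ℕ} (h : l₁.length = l₂.length)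
    (hg : ∀ j, j < l₁.length → l₁.getD j 8 = l₂.getD j 8) : l₁ = l₂ := by
  apply List.ext_getElem h
  intro i h1 h2
  have := hg i h1
  rwa [List.getD_eq_getElem _ _ h1, List.getD_eq_getElem _ _ h2] at this

/-- Master lemma: a family of model edge labels satisfying the piece conditions gives a
row, and any row over the same (weakly decreasing, ≤ 2) bottom string with the same
left border equals it. -/
lemma gen (m : ℕ) (hm : 0 < m) (B Lm Rm Tm : ℕ → ℕ)
    (bots mL mR mT : List ℕ)
    (hbl : bots.length = m) (hbg : ∀ j, j < m → bots.getD j 8 = B j)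
    (hLl : mL.length = m) (hLg : ∀ j, j < m → mL.getD j 8 = Lm j)
    (hRl : mR.length = m) (hRg : ∀ j, j < m → mR.getD j 8 = Rm j)
    (hTl : mT.length = m - 1) (hTg : ∀ j, j < m - 1 → mT.getD j 8 = Tm j)
    (H1 : ∀ j, j < m → IsPiece (Lm j, Rm j, B j))
    (H2 : ∀ j, j + 1 < m → IsPiece (Tm j, Lm (j+1), Rm j))
    (Hmono : ∀ j, j + 1 < m → B (j+1) ≤ B j)
    (Hb : ∀ j, j < m → B j ≤ 2) :
    IsRow mL mR mT bots ∧
    ∀ lfts rgts tops, IsRow lfts rgts tops bots → lfts.getD 0 8 = Lm 0 →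
      lfts = mL ∧ rgts = mR ∧ tops = mT := by
  constructor
  · refine ⟨by omega, by omega, by omega, ?_, ?_⟩
    · intro j hj
      rw [hLl] at hj
      rw [hLg j hj, hRg j hj, hbg j hj]
      exact H1 j hj
    · intro j hj
      rw [hLl] at hj
      rw [hTg j (by omega), hLg (j+1) hj, hRg j (by omega)]
      exact H2 j hj
  · intro lfts rgts tops hrow h0
    obtain ⟨e1, e2, e3, up, dn⟩ := hrow
    have hlen : lfts.length = m := by omega
    rw [hlen] at up dn
    have key : ∀ j, j < m → lfts.getD j 8 = Lm j ∧ rgts.getD j 8 = Rm j := by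
      intro j
      induction j with
      | zero =>
        intro h0m
        refine ⟨h0, ?_⟩
        have hu := up 0 h0m
        rw [hbg 0 h0m, h0] at hu
        rw [upR_eq hu (Hb 0 h0m)]
        exact (upR_eq (H1 0 h0m) (Hb 0 h0m)).symm
      | succ j ih =>
        intro hj
        obtain ⟨hL, hR⟩ := ih (by omega)
        have hu2 := up (j+1) hj
        rw [hbg (j+1) hj] at hu2
        have hd := dn j hj
        rw [hR] at hd
        have hRe : Rm j = upR (Lm j) (B j) := upR_eq (H1 j (by omega)) (Hb j (by omega))
        rw [hRe] at hd
        have h1m := H1 j (Nat.lt_of_succ_lt hj)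
        rw [hRe] at h1m
        have hrow2 := dn_eq (Hb j (by omega)) (Hmono j hj) h1m hd hu2
        have h2m := H2 j hj
        rw [hRe] at h2m
        have hmod2 := dn_eq (Hb j (by omega)) (Hmono j hj) h1m h2m (H1 (j+1) hj)
        have hLnext : lfts.getD (j+1) 8 = Lm (j+1) := by
          have := hrow2.trans hmod2.symm
          exact (Prod.mk.injEq _ _ _ _ ▸ this).2
        refine ⟨hLnext, ?_⟩
        have hu3 := up (j+1) hj
        rw [hbg (j+1) hj, hLnext] at hu3
        rw [upR_eq hu3 (Hb (j+1) hj)]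
        exact (upR_eq (H1 (j+1) hj) (Hb (j+1) hj)).symm
    have keyT : ∀ j, j + 1 < m → tops.getD j 8 = Tm j := by
      intro j hj
      obtain ⟨hL, hR⟩ := key j (by omega)
      obtain ⟨hL2, _⟩ := key (j+1) hj
      have hd := dn j hj
      rw [hR, hL2] at hd
      have hRe : Rm j = upR (Lm j) (B j) := upR_eq (H1 j (by omega)) (Hb j (by omega))
      rw [hRe] at hd
      have h1m := H1 j (Nat.lt_of_succ_lt hj)
      rw [hRe] at h1m
      have h2m := H2 j hj
      rw [hRe] at h2m
      have hu2 := H1 (j+1) hj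
      have hrow2 := dn_eq (Hb j (by omega)) (Hmono j hj) h1m hd hu2
      have hmod2 := dn_eq (Hb j (by omega)) (Hmono j hj) h1m h2m hu2
      have := hrow2.trans hmod2.symm
      exact (Prod.mk.injEq _ _ _ _ ▸ this).1
    refine ⟨?_, ?_, ?_⟩
    · exact list_eq_of_getD (by omega) (fun j hj => by
        rw [hLg j (by omega)]; exact (key j (by omega)).1)
    · exact list_eq_of_getD (by omega) (fun j hj => by
        rw [hRg j (by omega)]
        exact (key j (by omega)).2)
    · exact list_eq_of_getD (by omega) (fun j hj => by
        have hj' : j + 1 < m := by omega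
        rw [hTg j (by omega)]
        exact keyT j hj')


lemma erase_rep (v a : ℕ) (h : v ≠ a) (n : ℕ) (l : List ℕ) :
    (List.replicate n v ++ l).erase a = List.replicate n v ++ l.erase a := by
  induction n with
  | zero => simp
  | succ n ih =>
    rw [List.replicate_succ, List.cons_append, List.erase_cons_tail (by simp [h]),
      ih, List.cons_append]

lemma assemble (n₀ n₁ n₂ x : ℕ) (mL mR mT : List ℕ)
    (hrow : IsRow mL mR mT (idString3 n₀ n₁ n₂).reverse)
    (h0 : mL.getD 0 8 = x)
    (huniq : ∀ lfts rgts tops, IsRow lfts rgts tops (idString3 n₀ n₁ n₂).reverse →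
      lfts.getD 0 8 = x → lfts = mL ∧ rgts = mR ∧ tops = mT)
    (hlast : mR.getD (mL.length - 1) 8 = x)
    (hrev : mT.reverse = (idString3 n₀ n₁ n₂).erase x) :
    (∃! r : List ℕ × List ℕ × List ℕ,
      IsRow r.1 r.2.1 r.2.2 (idString3 n₀ n₁ n₂).reverse ∧ r.1.getD 0 8 = x) ∧
    (∀ lfts rgts tops, IsRow lfts rgts tops (idString3 n₀ n₁ n₂).reverse →
      lfts.getD 0 8 = x →
      rgts.getD (lfts.length - 1) 8 = x ∧
      tops.reverse = (idString3 n₀ n₁ n₂).erase x) := by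
  constructor
  · refine ⟨(mL, mR, mT), ⟨hrow, h0⟩, ?_⟩
    rintro ⟨a, b, c⟩ ⟨hr, ha⟩
    obtain ⟨e1, e2, e3⟩ := huniq a b c hr ha
    subst e1; subst e2; subst e3; rfl
  · intro lfts rgts tops hr hl
    obtain ⟨e1, e2, e3⟩ := huniq lfts rgts tops hr hl
    subst e1; subst e2; subst e3
    exact ⟨hlast, hrev⟩

/-- Lemma on row fillings: there is a unique single row with left border label x and
bottom border reading the identity string right-to-left; its right border label is x
and its top border reads, right-to-left, the identity string with one x removed. -/
theorem unique_row_filling (n₀ n₁ n₂ x : ℕ) (hx : x ≤ 2)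
    (hocc : x ∈ idString3 n₀ n₁ n₂) :
    (∃! r : List ℕ × List ℕ × List ℕ,
      IsRow r.1 r.2.1 r.2.2 (idString3 n₀ n₁ n₂).reverse ∧ r.1.getD 0 8 = x) ∧
    (∀ lfts rgts tops, IsRow lfts rgts tops (idString3 n₀ n₁ n₂).reverse →
      lfts.getD 0 8 = x →
      rgts.getD (lfts.length - 1) 8 = x ∧
      tops.reverse = (idString3 n₀ n₁ n₂).erase x) := by
  have hbots : (idString3 n₀ n₁ n₂).reverse =
      List.replicate n₂ 2 ++ (List.replicate n₁ 1 ++ List.replicate n₀ 0) := by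
    simp [idString3]
  interval_cases x
  · -- x = 0
    have hn : 1 ≤ n₀ := by
      simp [idString3, List.mem_replicate] at hocc; omega
    obtain ⟨hrow, huniq⟩ := gen (n₂ + n₁ + n₀) (by omega)
      (fun j => if j < n₂ then 2 else if j < n₂ + n₁ then 1 else 0)
      (fun _ => 0)
      (fun j => if j < n₂ then 5 else if j < n₂ + n₁ then 3 else 0)
      (fun j => if j < n₂ then 2 else if j < n₂ + n₁ then 1 else 0)
      ((idString3 n₀ n₁ n₂).reverse)
      (List.replicate (n₂ + n₁ + n₀) 0)
      (List.replicate n₂ 5 ++ (List.replicate n₁ 3 ++ List.replicate n₀ 0))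
      (List.replicate n₂ 2 ++ (List.replicate n₁ 1 ++ List.replicate (n₀ - 1) 0))
      (by rw [hbots]; simp only [List.length_append, List.length_replicate]; try omega)
      (by intro j hj; rw [hbots]; simp only [getD_rep_app, getD_rep]; split_ifs <;> omega)
      (by simp only [List.length_append, List.length_replicate]; try omega)
      (by intro j hj; simp only [getD_rep]; split_ifs <;> omega)
      (by simp only [List.length_append, List.length_replicate]; try omega)
      (by intro j hj; simp only [getD_rep_app, getD_rep]; split_ifs <;> omega)
      (by simp only [List.length_append, List.length_replicate]; try omega)
      (by intro j hj; simp only [getD_rep_app, getD_rep]; split_ifs <;> omega)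
      (by intro j hj; split_ifs <;> first | decide | omega | (exfalso; omega))
      (by intro j hj; split_ifs <;> first | decide | omega | (exfalso; omega))
      (by intro j hj; split_ifs <;> omega)
      (by intro j hj; split_ifs <;> omega)
    refine assemble n₀ n₁ n₂ 0 _ _ _ hrow ?_ (fun a b c hr h => huniq a b c hr h) ?_ ?_
    · rw [getD_rep]; split_ifs <;> omega
    · simp only [List.length_replicate, getD_rep_app, getD_rep]; split_ifs <;> omega
    · obtain ⟨k, rfl⟩ : ∃ k, n₀ = k + 1 := ⟨n₀ - 1, by omega⟩
      simp [idString3, List.replicate_succ, List.reverse_append]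
  · -- x = 1
    have hn : 1 ≤ n₁ := by
      simp [idString3, List.mem_replicate] at hocc; omega
    obtain ⟨hrow, huniq⟩ := gen (n₂ + n₁ + n₀) (by omega)
      (fun j => if j < n₂ then 2 else if j < n₂ + n₁ then 1 else 0)
      (fun j => if j < n₂ + n₁ then 1 else 3)
      (fun j => if j < n₂ then 4 else 1)
      (fun j => if j < n₂ then 2 else if j < n₂ + n₁ - 1 then 1 else 0)
      ((idString3 n₀ n₁ n₂).reverse)
      (List.replicate (n₂ + n₁) 1 ++ List.replicate n₀ 3)
      (List.replicate n₂ 4 ++ List.replicate (n₁ + n₀) 1)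
      (List.replicate n₂ 2 ++ (List.replicate (n₁ - 1) 1 ++ List.replicate n₀ 0))
      (by rw [hbots]; simp only [List.length_append, List.length_replicate]; try omega)
      (by intro j hj; rw [hbots]; simp only [getD_rep_app, getD_rep]; split_ifs <;> omega)
      (by simp only [List.length_append, List.length_replicate]; try omega)
      (by intro j hj; simp only [getD_rep_app, getD_rep]; split_ifs <;> omega)
      (by simp only [List.length_append, List.length_replicate]; try omega)
      (by intro j hj; simp only [getD_rep_app, getD_rep]; split_ifs <;> omega)
      (by simp only [List.length_append, List.length_replicate]; try omega)
      (by intro j hj; simp only [getD_rep_app, getD_rep]; split_ifs <;> omega)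
      (by intro j hj; split_ifs <;> first | decide | omega | (exfalso; omega))
      (by intro j hj; split_ifs <;> first | decide | omega | (exfalso; omega))
      (by intro j hj; split_ifs <;> omega)
      (by intro j hj; split_ifs <;> omega)
    refine assemble n₀ n₁ n₂ 1 _ _ _ hrow ?_ (fun a b c hr h => huniq a b c hr (by
        rw [h]; split_ifs <;> omega)) ?_ ?_
    · simp only [getD_rep_app, getD_rep]; split_ifs <;> omega
    · simp only [List.length_append, List.length_replicate, getD_rep_app, getD_rep]
      split_ifs <;> omega
    · obtain ⟨k, rfl⟩ : ∃ k, n₁ = k + 1 := ⟨n₁ - 1, by omega⟩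
      simp only [idString3]
      rw [List.append_assoc, erase_rep 0 1 (by decide)]
      simp [List.replicate_succ, List.reverse_append, List.append_assoc]
  · -- x = 2
    have hn : 1 ≤ n₂ := by
      simp [idString3, List.mem_replicate] at hocc; omega
    obtain ⟨hrow, huniq⟩ := gen (n₂ + n₁ + n₀) (by omega)
      (fun j => if j < n₂ then 2 else if j < n₂ + n₁ then 1 else 0)
      (fun j => if j < n₂ then 2 else if j < n₂ + n₁ then 4 else 5)
      (fun _ => 2)
      (fun j => if j + 1 < n₂ then 2 else if j + 1 < n₂ + n₁ then 1 else 0)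
      ((idString3 n₀ n₁ n₂).reverse)
      (List.replicate n₂ 2 ++ (List.replicate n₁ 4 ++ List.replicate n₀ 5))
      (List.replicate (n₂ + n₁ + n₀) 2)
      (List.replicate (n₂ - 1) 2 ++ (List.replicate n₁ 1 ++ List.replicate n₀ 0))
      (by rw [hbots]; simp only [List.length_append, List.length_replicate]; try omega)
      (by intro j hj; rw [hbots]; simp only [getD_rep_app, getD_rep]; split_ifs <;> omega)
      (by simp only [List.length_append, List.length_replicate]; try omega)
      (by intro j hj; simp only [getD_rep_app, getD_rep]; split_ifs <;> omega)
      (by simp only [List.length_append, List.length_replicate]; try omega)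
      (by intro j hj; simp only [getD_rep]; split_ifs <;> omega)
      (by simp only [List.length_append, List.length_replicate]; try omega)
      (by intro j hj; simp only [getD_rep_app, getD_rep]; split_ifs <;> omega)
      (by intro j hj; split_ifs <;> first | decide | omega | (exfalso; omega))
      (by intro j hj; split_ifs <;> first | decide | omega | (exfalso; omega))
      (by intro j hj; split_ifs <;> omega)
      (by intro j hj; split_ifs <;> omega)
    refine assemble n₀ n₁ n₂ 2 _ _ _ hrow ?_ (fun a b c hr h => huniq a b c hr (by
        rw [h]; split_ifs <;> omega)) ?_ ?_
    · simp only [getD_rep_app, getD_rep]; split_ifs <;> omega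
    · simp only [List.length_append, List.length_replicate, getD_rep]
      split_ifs <;> omega
    · obtain ⟨k, rfl⟩ : ∃ k, n₂ = k + 1 := ⟨n₂ - 1, by omega⟩
      simp only [idString3]
      rw [List.append_assoc, erase_rep 0 2 (by decide), erase_rep 1 2 (by decide)]
      simp [List.replicate_succ, List.reverse_append, List.append_assoc]
end

section
/- Let v be any 012-string of length n with a zeros, b−a ones, and n−b twos, and let 𝟎 = (0^a, 1^{b−a}, 2^{n−b}). Then there exists a unique triangular puzzle with labels 𝟎 on the left border and v on the right border (both read clockwise), and the bottom border labels of this unique puzzle equal v read counter-clockwise. -/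
/-- A triangular puzzle of size n: upward triangles (i,j) for j ≤ i < n with edges
(L i j, R i j, B i j) and downward triangles with clockwise edges
(B (i-1) j, L i (j+1), R i j) for j < i < n. -/
def IsTriPuzzle (n : ℕ) (L R B : ℕ → ℕ → ℕ) : Prop :=
  (∀ i j, j ≤ i → i < n → IsPiece (L i j, R i j, B i j)) ∧
  (∀ i j, j < i → i < n → IsPiece (B (i-1) j, L i (j+1), R i j))

/-- The left border read clockwise (bottom-to-top). -/
def triLeftCW (n : ℕ) (L : ℕ → ℕ → ℕ) : List ℕ :=
  List.ofFn (fun i : Fin n => L (n - 1 - (i : ℕ)) 0)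

/-- The right border read clockwise (top-to-bottom). -/
def triRightCW (n : ℕ) (R : ℕ → ℕ → ℕ) : List ℕ :=
  List.ofFn (fun i : Fin n => R (i : ℕ) (i : ℕ))

/-- The bottom border read counter-clockwise (left-to-right). -/
def triBottomCCW (n : ℕ) (B : ℕ → ℕ → ℕ) : List ℕ :=
  List.ofFn (fun j : Fin n => B (n - 1) (j : ℕ))

/-- Normalization: all labels outside the domain are 0 (so that puzzles can be counted). -/
def TriNormalized (n : ℕ) (L R B : ℕ → ℕ → ℕ) : Prop :=
  ∀ i j, ¬(j ≤ i ∧ i < n) → L i j = 0 ∧ R i j = 0 ∧ B i j = 0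

/-- C^w_{u,v}: the number of triangular puzzles with left border u (clockwise),
right border v (clockwise) and bottom border w (counter-clockwise). -/
noncomputable def puzzleCount (n : ℕ) (u v w : List ℕ) : ℕ :=
  Set.ncard { T : (ℕ → ℕ → ℕ) × (ℕ → ℕ → ℕ) × (ℕ → ℕ → ℕ) |
    IsTriPuzzle n T.1 T.2.1 T.2.2 ∧ TriNormalized n T.1 T.2.1 T.2.2 ∧
    triLeftCW n T.1 = u ∧ triRightCW n T.2.1 = v ∧ triBottomCCW n T.2.2 = w }

/-- The identity 012-string 𝟎 = (0^a, 1^{b-a}, 2^{n-b}) for Fl(a,b;n). -/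
def idString (a b n : ℕ) : List ℕ :=
  List.replicate a 0 ++ List.replicate (b - a) 1 ++ List.replicate (n - b) 2

/-- A 012-string for the flag variety Fl(a,b;n). -/
def Is012For (a b n : ℕ) (u : List ℕ) : Prop :=
  u.length = n ∧ u.count 0 = a ∧ u.count 1 = b - a ∧ u.count 2 = n - b ∧ ∀ x ∈ u, x ≤ 2

namespace IdPuz

instance : DecidablePred IsPiece := fun t => by unfold IsPiece; infer_instance

def rfun : ℕ → ℕ → ℕ
  | 0, 1 => 3 | 0, 2 => 5 | 1, 1 => 1 | 1, 2 => 4 | 2, 1 => 1 | 2, 2 => 2 | _, _ => 0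
def mfun : ℕ → ℕ → ℕ
  | 0, 1 => 1 | 0, 2 => 2 | 1, 0 => 3 | 1, 1 => 1 | 1, 2 => 2
  | 2, 0 => 5 | 2, 1 => 4 | 2, 2 => 2 | _, _ => 0

lemma U2 {p q q' r : ℕ} (h : IsPiece (p, q, r)) (h' : IsPiece (p, q', r)) : q = q' := by
  simp [IsPiece, puzzleBase, rot3] at h h'; omega

lemma U3 {p q r r' : ℕ} (h : IsPiece (p, q, r)) (h' : IsPiece (p, q, r')) : r = r' := by
  simp [IsPiece, puzzleBase, rot3] at h h'; omega

lemma upPiece {l x : ℕ} (hl : l ≤ 2) (hx : x ≤ 2) : IsPiece (l, rfun l x, mfun l x) := by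
  interval_cases l <;> interval_cases x <;> decide

lemma K1 {l2 l x r c d : ℕ} (h2 : l2 ≤ 2) (hll : l ≤ l2) (hx : x ≤ 2)
    (hexcl : ¬(l2 = 2 ∧ l = 0 ∧ x = 1))
    (hup : IsPiece (l, r, c)) (hdn : IsPiece (mfun l2 x, d, r)) : r = rfun l x := by
  interval_cases l2 <;> interval_cases l <;> interval_cases x <;>
    simp [IsPiece, puzzleBase, rot3, mfun, rfun] at hup hdn hexcl ⊢ <;> omega

lemma rfun_id {l x : ℕ} (h : x ≤ l) (hl : l ≤ 2) : rfun l x = x := by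
  interval_cases l <;> interval_cases x <;> rfl

lemma mfun_id {l x : ℕ} (h : l ≤ x) (hx : x ≤ 2) : mfun l x = x := by
  interval_cases x <;> interval_cases l <;> rfl

def cnt (v : List ℕ) (x j : ℕ) : ℕ := (v.take j).count x

lemma cnt_zero (v : List ℕ) (x : ℕ) : cnt v x 0 = 0 := by simp [cnt]

lemma cnt_succ (v : List ℕ) (x j : ℕ) (hj : j < v.length) :
    cnt v x (j+1) = cnt v x j + if v.getD j 0 = x then 1 else 0 := by
  unfold cnt
  rw [List.take_succ, List.getElem?_eq_getElem hj, List.getD_eq_getElem v 0 hj,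
    List.count_append, Option.toList_some, List.count_singleton']

lemma cnt_le (v : List ℕ) (x j : ℕ) : cnt v x j ≤ v.count x :=
  (List.take_sublist j v).count_le x

lemma count012 (l : List ℕ) (h : ∀ x ∈ l, x ≤ 2) :
    l.count 0 + l.count 1 + l.count 2 = l.length := by
  induction l with
  | nil => simp
  | cons y t ih =>
    have hy : y ≤ 2 := h y (by simp)
    have ht := ih (fun x hx => h x (by simp [hx]))
    interval_cases y <;> simp [List.count_cons] <;> omega

lemma cnt_sum (v : List ℕ) (j : ℕ) (hj : j ≤ v.length) (h : ∀ x ∈ v, x ≤ 2) :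
    cnt v 0 j + cnt v 1 j + cnt v 2 j = j := by
  unfold cnt
  rw [count012 (v.take j) (fun x hx => h x (List.mem_of_mem_take hx))]
  simp [List.length_take]; omega

def Lx (a b n : ℕ) (v : List ℕ) (i j : ℕ) : ℕ :=
  if i + cnt v 2 j + b < j + n then 2
  else if i + cnt v 1 j + cnt v 2 j + a < j + n then 1 else 0

def Rx (a b n : ℕ) (v : List ℕ) (i j : ℕ) : ℕ := rfun (Lx a b n v i j) (v.getD j 0)
def Bx (a b n : ℕ) (v : List ℕ) (i j : ℕ) : ℕ := mfun (Lx a b n v i j) (v.getD j 0)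

lemma Lx_le_two (a b n : ℕ) (v : List ℕ) (i j : ℕ) : Lx a b n v i j ≤ 2 := by
  unfold Lx; split_ifs <;> omega

lemma Lx_anti (a b n : ℕ) (v : List ℕ) {i i' : ℕ} (j : ℕ) (h : i ≤ i') :
    Lx a b n v i' j ≤ Lx a b n v i j := by
  unfold Lx; split_ifs <;> omega

section
variable {a b n : ℕ} {v : List ℕ}

lemma xj_le (hv : Is012For a b n v) {j : ℕ} (hj : j < n) : v.getD j 0 ≤ 2 := by
  have hj' : j < v.length := by rw [hv.1]; exact hj
  rw [List.getD_eq_getElem v 0 hj']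
  exact hv.2.2.2.2 _ (List.getElem_mem hj')

lemma cnt2_le (hv : Is012For a b n v) (j : ℕ) : cnt v 2 j ≤ n - b :=
  hv.2.2.2.1 ▸ cnt_le v 2 j

lemma cnt1_le (hv : Is012For a b n v) (j : ℕ) : cnt v 1 j ≤ b - a :=
  hv.2.2.1 ▸ cnt_le v 1 j

lemma cnt0_le (hv : Is012For a b n v) (j : ℕ) : cnt v 0 j ≤ a :=
  hv.2.1 ▸ cnt_le v 0 j

lemma Lx_step2 (hv : Is012For a b n v) {j : ℕ} (hj : j < n) (hx : v.getD j 0 = 2) (i : ℕ) :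
    Lx a b n v i (j+1) = Lx a b n v i j := by
  have hj' : j < v.length := by rw [hv.1]; exact hj
  have h2s := cnt_succ v 2 j hj'
  have h1s := cnt_succ v 1 j hj'
  rw [hx] at h2s h1s; simp at h2s h1s
  have hb2 := cnt2_le hv (j+1)
  rw [h2s] at hb2
  unfold Lx; rw [h2s, h1s]; split_ifs <;> omega

lemma Lx_step0 (hv : Is012For a b n v) {j : ℕ} (hj : j < n) (hx : v.getD j 0 = 0) (i : ℕ) :
    Lx a b n v (i+1) (j+1) = Lx a b n v i j := by
  have hj' : j < v.length := by rw [hv.1]; exact hj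
  have h2s := cnt_succ v 2 j hj'
  have h1s := cnt_succ v 1 j hj'
  rw [hx] at h2s h1s; simp at h2s h1s
  unfold Lx; rw [h2s, h1s]; split_ifs <;> omega

lemma Lx_step1_two (hv : Is012For a b n v) {j : ℕ} (hj : j < n) (hx : v.getD j 0 = 1) (k : ℕ) :
    (Lx a b n v (k+1) (j+1) = 2 ↔ Lx a b n v k j = 2) := by
  have hj' : j < v.length := by rw [hv.1]; exact hj
  have h2s := cnt_succ v 2 j hj'
  have h1s := cnt_succ v 1 j hj'
  rw [hx] at h2s h1s; simp at h2s h1s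
  have hb1 := cnt1_le hv (j+1)
  rw [h1s] at hb1
  unfold Lx; rw [h2s, h1s]; split_ifs <;> simp_all <;> omega

lemma Lx_step1_zero (hv : Is012For a b n v) {j : ℕ} (hj : j < n) (hx : v.getD j 0 = 1) (k : ℕ) :
    (Lx a b n v (k+1) (j+1) = 0 ↔ Lx a b n v (k+1) j = 0) := by
  have hj' : j < v.length := by rw [hv.1]; exact hj
  have h2s := cnt_succ v 2 j hj'
  have h1s := cnt_succ v 1 j hj'
  rw [hx] at h2s h1s; simp at h2s h1s
  have hb1 := cnt1_le hv (j+1)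
  rw [h1s] at hb1
  unfold Lx; rw [h2s, h1s]; split_ifs <;> simp_all <;> omega

lemma Lx_excl1 (hv : Is012For a b n v) {j : ℕ} (hj : j < n) (hx : v.getD j 0 = 1) (k : ℕ) :
    ¬(Lx a b n v k j = 2 ∧ Lx a b n v (k+1) j = 0) := by
  have hj' : j < v.length := by rw [hv.1]; exact hj
  have h1s := cnt_succ v 1 j hj'
  rw [hx] at h1s; simp at h1s
  have hb1 := cnt1_le hv (j+1)
  rw [h1s] at hb1
  unfold Lx; split_ifs <;> simp_all <;> omega

/-- The workhorse: all structural data around a downward triangle. -/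
lemma downData (hv : Is012For a b n v) {j k : ℕ} (hj : j ≤ k) (hk : k + 1 < n) :
    Lx a b n v k j ≤ 2 ∧ Lx a b n v (k+1) j ≤ Lx a b n v k j ∧ v.getD j 0 ≤ 2 ∧
    ¬(Lx a b n v k j = 2 ∧ Lx a b n v (k+1) j = 0 ∧ v.getD j 0 = 1) ∧
    IsPiece (Bx a b n v k j, Lx a b n v (k+1) (j+1), Rx a b n v (k+1) j) := by
  have hjn : j < n := by omega
  have hxle := xj_le hv hjn
  refine ⟨Lx_le_two a b n v k j, Lx_anti a b n v j (Nat.le_succ k), hxle, ?_, ?_⟩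
  · rintro ⟨h1, h2, h3⟩
    exact Lx_excl1 hv hjn h3 k ⟨h1, h2⟩
  · unfold Bx Rx
    have hl2 := Lx_le_two a b n v k j
    have hl := Lx_le_two a b n v (k+1) j
    have hlam := Lx_le_two a b n v (k+1) (j+1)
    have hmono := Lx_anti a b n v j (Nat.le_succ k)
    interval_cases hxc : (v.getD j 0)
    · -- x = 0
      rw [Lx_step0 hv hjn hxc k]
      have : rfun (Lx a b n v (k+1) j) 0 = 0 := by
        interval_cases (Lx a b n v (k+1) j) <;> rfl
      rw [this]
      interval_cases (Lx a b n v k j) <;> decide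
    · -- x = 1
      have ht := Lx_step1_two hv hjn hxc k
      have hz := Lx_step1_zero hv hjn hxc k
      have hex := Lx_excl1 hv hjn hxc k
      interval_cases (Lx a b n v k j) <;> interval_cases (Lx a b n v (k+1) j) <;>
        interval_cases (Lx a b n v (k+1) (j+1)) <;> simp_all <;> decide
    · -- x = 2
      rw [Lx_step2 hv hjn hxc (k+1)]
      interval_cases (Lx a b n v k j) <;> interval_cases (Lx a b n v (k+1) j) <;>
        simp_all <;> decide

end
end IdPuz

namespace IdPuz
section
variable {a b n : ℕ} {v : List ℕ}

lemma idString_getElem (hab : a ≤ b) (hbn : b ≤ n) {k : ℕ} (hk : k < (idString a b n).length) :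
    (idString a b n)[k] = if k < a then 0 else if k < b then 1 else 2 := by
  unfold idString at *
  simp only [List.getElem_append, List.getElem_replicate,
    List.length_append, List.length_replicate] at *
  split_ifs <;> omega

lemma idString_length (hab : a ≤ b) (hbn : b ≤ n) : (idString a b n).length = n := by
  simp [idString]; omega

lemma left_border (hab : a ≤ b) (hbn : b ≤ n) (hv : Is012For a b n v) :
    triLeftCW n (Lx a b n v) = idString a b n := by
  apply List.ext_getElem
  · simp [triLeftCW, idString_length hab hbn]
  · intro k h1 h2
    simp only [triLeftCW, List.getElem_ofFn]
    rw [idString_getElem hab hbn h2]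
    have hkn : k < n := by simpa [triLeftCW] using h1
    unfold Lx
    rw [cnt_zero, cnt_zero]
    split_ifs <;> omega

lemma Lx_diag_ge (hab : a ≤ b) (hbn : b ≤ n) (hv : Is012For a b n v) {i : ℕ} (hi : i < n) :
    v.getD i 0 ≤ Lx a b n v i i := by
  have hi' : i < v.length := by rw [hv.1]; exact hi
  have hxle := xj_le hv hi
  interval_cases hxc : (v.getD i 0)
  · omega
  · have h1s := cnt_succ v 1 i hi'
    rw [hxc] at h1s; simp at h1s
    have hb1 := cnt1_le hv (i+1)
    rw [h1s] at hb1
    have hb2 := cnt2_le hv i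
    unfold Lx; split_ifs <;> omega
  · have h2s := cnt_succ v 2 i hi'
    rw [hxc] at h2s; simp at h2s
    have hb2 := cnt2_le hv (i+1)
    rw [h2s] at hb2
    unfold Lx; split_ifs <;> omega

lemma right_border (hab : a ≤ b) (hbn : b ≤ n) (hv : Is012For a b n v) : triRightCW n (Rx a b n v) = v := by
  apply List.ext_getElem
  · simp [triRightCW, hv.1]
  · intro k h1 h2
    simp only [triRightCW, List.getElem_ofFn]
    have hkn : k < n := by simpa [triRightCW] using h1
    unfold Rx
    rw [rfun_id (Lx_diag_ge hab hbn hv hkn) (Lx_le_two a b n v k k)]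
    exact List.getD_eq_getElem v 0 h2

lemma Lx_bottom_le (hab : a ≤ b) (hbn : b ≤ n) (hv : Is012For a b n v)
    {j : ℕ} (hj : j < n) (hn : 1 ≤ n) :
    Lx a b n v (n-1) j ≤ v.getD j 0 := by
  have hj' : j < v.length := by rw [hv.1]; exact hj
  have hxle := xj_le hv hj
  have hsum := cnt_sum v j (le_of_lt hj') hv.2.2.2.2
  have hb2 := cnt2_le hv j
  have hb1 := cnt1_le hv j
  have hb0 := cnt0_le hv j
  interval_cases hxc : (v.getD j 0)
  · have h0s := cnt_succ v 0 j hj'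
    rw [hxc] at h0s; simp at h0s
    have hb0' := cnt0_le hv (j+1)
    rw [h0s] at hb0'
    unfold Lx; split_ifs <;> omega
  · have h1s := cnt_succ v 1 j hj'
    rw [hxc] at h1s; simp at h1s
    have hb1' := cnt1_le hv (j+1)
    rw [h1s] at hb1'
    unfold Lx; split_ifs <;> omega
  · exact Lx_le_two a b n v (n-1) j

lemma bottom_border (hab : a ≤ b) (hbn : b ≤ n) (hv : Is012For a b n v) :
    triBottomCCW n (Bx a b n v) = v := by
  apply List.ext_getElem
  · simp [triBottomCCW, hv.1]
  · intro k h1 h2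
    simp only [triBottomCCW, List.getElem_ofFn]
    have hkn : k < n := by simpa [triBottomCCW] using h1
    unfold Bx
    rw [mfun_id (Lx_bottom_le hab hbn hv hkn (by omega)) (xj_le hv hkn)]
    exact List.getD_eq_getElem v 0 h2

lemma explicit_puzzle (hv : Is012For a b n v) :
    IsTriPuzzle n (Lx a b n v) (Rx a b n v) (Bx a b n v) := by
  constructor
  · intro i j hj hi
    exact upPiece (Lx_le_two a b n v i j) (xj_le hv (by omega))
  · intro i j hj hi
    obtain ⟨i, rfl⟩ : ∃ k, i = k + 1 := ⟨i - 1, by omega⟩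
    simpa using (downData hv (by omega : j ≤ i) hi).2.2.2.2

end
end IdPuz

namespace IdPuz
section
variable {a b n : ℕ} {v : List ℕ}

lemma left_extract {L : ℕ → ℕ → ℕ} (hab : a ≤ b) (hbn : b ≤ n) (hv : Is012For a b n v)
    (hL : triLeftCW n L = idString a b n) {i : ℕ} (hi : i < n) :
    L i 0 = Lx a b n v i 0 := by
  have h := hL.trans (left_border hab hbn hv).symm
  unfold triLeftCW at h
  rw [List.ofFn_inj] at h
  have h2 := congrFun h ⟨n - 1 - i, by omega⟩
  simpa [show n - 1 - (n - 1 - i) = i by omega] using h2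

lemma right_extract {R : ℕ → ℕ → ℕ} (hab : a ≤ b) (hbn : b ≤ n) (hv : Is012For a b n v)
    (hR : triRightCW n R = v) {i : ℕ} (hi : i < n) :
    R i i = Rx a b n v i i := by
  have h := hR.trans (right_border hab hbn hv).symm
  unfold triRightCW at h
  rw [List.ofFn_inj] at h
  simpa using congrFun h ⟨i, hi⟩

lemma main_uniq {L R B : ℕ → ℕ → ℕ} (hab : a ≤ b) (hbn : b ≤ n) (hv : Is012For a b n v)
    (hp : IsTriPuzzle n L R B) (hL : triLeftCW n L = idString a b n)
    (hR : triRightCW n R = v) :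
    ∀ i, i < n → ∀ j, j ≤ i →
      L i j = Lx a b n v i j ∧ R i j = Rx a b n v i j ∧ B i j = Bx a b n v i j := by
  intro i
  induction i with
  | zero =>
    intro hi j hj
    interval_cases j
    have hL0 := left_extract hab hbn hv hL hi
    have hR0 := right_extract hab hbn hv hR hi
    refine ⟨hL0, hR0, ?_⟩
    have hup := hp.1 0 0 le_rfl hi
    rw [hL0, hR0] at hup
    exact U3 hup (upPiece (Lx_le_two a b n v 0 0) (xj_le hv hi))
  | succ k ih =>
    intro hi j hj
    have hk : k < n := by omega
    have hrowL : ∀ m, m ≤ k + 1 → L (k+1) m = Lx a b n v (k+1) m := by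
      intro m
      induction m with
      | zero => exact fun _ => left_extract hab hbn hv hL hi
      | succ m ihm =>
        intro hm
        have hmk : m ≤ k := by omega
        have hLm := ihm (by omega)
        have hup := hp.1 (k+1) m (by omega) hi
        have hdn := hp.2 (k+1) m (by omega) hi
        simp only [Nat.add_sub_cancel] at hdn
        have hBkm : B k m = mfun (Lx a b n v k m) (v.getD m 0) := (ih hk m hmk).2.2
        obtain ⟨c1, c2, c3, c4, hpc⟩ := downData hv hmk hi
        rw [hLm] at hup
        rw [hBkm] at hdn
        have hRm : R (k+1) m = rfun (Lx a b n v (k+1) m) (v.getD m 0) :=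
          K1 c1 c2 c3 c4 hup hdn
        rw [hRm] at hdn
        exact U2 hdn hpc
    have hLj := hrowL j hj
    have hRj : R (k+1) j = Rx a b n v (k+1) j := by
      rcases Nat.lt_or_ge j (k+1) with hjk | hjk
      · have hmk : j ≤ k := by omega
        have hup := hp.1 (k+1) j hj hi
        have hdn := hp.2 (k+1) j hjk hi
        simp only [Nat.add_sub_cancel] at hdn
        have hBkj : B k j = mfun (Lx a b n v k j) (v.getD j 0) := (ih hk j hmk).2.2
        obtain ⟨c1, c2, c3, c4, hpc⟩ := downData hv hmk hi
        rw [hLj] at hup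
        rw [hBkj] at hdn
        exact K1 c1 c2 c3 c4 hup hdn
      · have hjq : j = k + 1 := by omega
        subst hjq
        exact right_extract hab hbn hv hR hi
    refine ⟨hLj, hRj, ?_⟩
    have hup := hp.1 (k+1) j hj hi
    rw [hLj, hRj] at hup
    exact U3 hup (upPiece (Lx_le_two a b n v (k+1) j) (xj_le hv (by omega)))

end
end IdPuz

/-- For any 012-string v for Fl(a,b;n) there is a unique triangular puzzle with left
border 𝟎 and right border v (both clockwise), and its bottom border (read
counter-clockwise) is v. -/
theorem unique_identity_puzzle (n a b : ℕ) (hab : a ≤ b) (hbn : b ≤ n)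
    (v : List ℕ) (hv : Is012For a b n v) :
    (∃ L R B, IsTriPuzzle n L R B ∧
      triLeftCW n L = idString a b n ∧ triRightCW n R = v) ∧
    (∀ L R B L' R' B', IsTriPuzzle n L R B →
      triLeftCW n L = idString a b n → triRightCW n R = v →
      IsTriPuzzle n L' R' B' →
      triLeftCW n L' = idString a b n → triRightCW n R' = v →
      ∀ i j, j ≤ i → i < n → L i j = L' i j ∧ R i j = R' i j ∧ B i j = B' i j) ∧
    (∀ L R B, IsTriPuzzle n L R B →
      triLeftCW n L = idString a b n → triRightCW n R = v →
      triBottomCCW n B = v) := by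
  refine ⟨⟨IdPuz.Lx a b n v, IdPuz.Rx a b n v, IdPuz.Bx a b n v, IdPuz.explicit_puzzle hv,
      IdPuz.left_border hab hbn hv, IdPuz.right_border hab hbn hv⟩, ?_, ?_⟩
  · intro L R B L' R' B' hp hL hR hp' hL' hR' i j hj hi
    have h1 := IdPuz.main_uniq hab hbn hv hp hL hR i hi j hj
    have h2 := IdPuz.main_uniq hab hbn hv hp' hL' hR' i hi j hj
    exact ⟨h1.1.trans h2.1.symm, h1.2.1.trans h2.2.1.symm, h1.2.2.trans h2.2.2.symm⟩
  · intro L R B hp hL hR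
    rw [← IdPuz.bottom_border hab hbn hv]
    unfold triBottomCCW
    congr 1
    funext j
    have hj : (j : ℕ) < n := j.isLt
    exact (IdPuz.main_uniq hab hbn hv hp hL hR (n-1) (by omega) j (by omega)).2.2
end

section
/- With C^w_{u,v} defined as the number of triangular puzzles with border labels u (left, clockwise), v (right, clockwise), and w (bottom, counter-clockwise), one has C^w_{𝟎,u} = δ_{u,w} for all 012-strings u, w for Fl(a,b;n), where 𝟎 = (0^a, 1^{b−a}, 2^{n−b}). -/
/-! ### Auxiliary construction -/

/-- sorted-decreasing label profile: 2s, then 1s, then 0s. -/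
def F2 (c2 c1 m : ℕ) : ℕ := if m < c2 then 2 else if m < c2 + c1 then 1 else 0

/-- right edge of an upward triangle with left edge `l` in a column carrying `v`. -/
def fE (l v : ℕ) : ℕ := if l < v then (if l = 1 then 4 else if v = 2 then 5 else 3) else v

/-- bottom edge of an upward triangle with left edge `l` in a column carrying `v`. -/
def gE (l v : ℕ) : ℕ := if v < l then (if v = 1 then 4 else if l = 2 then 5 else 3) else v

def cL (u : List ℕ) (n i j : ℕ) : ℕ :=
  if j ≤ i ∧ i < n then F2 ((u.drop j).count 2) ((u.drop j).count 1) (i - j) else 0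

def cR (u : List ℕ) (n i j : ℕ) : ℕ :=
  if j ≤ i ∧ i < n then fE (cL u n i j) (u.getD j 0) else 0

def cB (u : List ℕ) (n i j : ℕ) : ℕ :=
  if j ≤ i ∧ i < n then gE (cL u n i j) (u.getD j 0) else 0

instance : DecidablePred IsPiece := fun t => by
  unfold IsPiece; infer_instance

lemma cL_eq {u : List ℕ} {n i j : ℕ} (h : j ≤ i ∧ i < n) :
    cL u n i j = F2 ((u.drop j).count 2) ((u.drop j).count 1) (i - j) := if_pos h

lemma cR_eq {u : List ℕ} {n i j : ℕ} (h : j ≤ i ∧ i < n) :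
    cR u n i j = fE (cL u n i j) (u.getD j 0) := if_pos h

lemma cB_eq {u : List ℕ} {n i j : ℕ} (h : j ≤ i ∧ i < n) :
    cB u n i j = gE (cL u n i j) (u.getD j 0) := if_pos h

/-! ### Piece case-bash lemmas -/

lemma uniq2 {x y y' z : ℕ} (h : IsPiece (x,y,z)) (h' : IsPiece (x,y',z)) : y = y' := by
  simp only [IsPiece, puzzleBase, rot3, List.mem_cons, List.not_mem_nil, or_false,
    Prod.mk.injEq] at h h'
  omega

lemma uniq3 {x y z z' : ℕ} (h : IsPiece (x,y,z)) (h' : IsPiece (x,y,z')) : z = z' := by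
  simp only [IsPiece, puzzleBase, rot3, List.mem_cons, List.not_mem_nil, or_false,
    Prod.mk.injEq] at h h'
  omega

set_option maxHeartbeats 2000000 in
lemma stepdet {lm l v r b l' : ℕ} (hll : l ≤ lm) (hlm : lm ≤ 2) (hv : v ≤ 2)
    (hx : v = 1 → lm = 2 → l ≠ 0)
    (hp : IsPiece (l, r, b)) (hq : IsPiece (gE lm v, l', r)) : r = fE l v := by
  have hx' : v ≠ 1 ∨ lm ≠ 2 ∨ l ≠ 0 := by
    by_cases h1 : v = 1
    · by_cases h2 : lm = 2
      · exact Or.inr (Or.inr (hx h1 h2))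
      · exact Or.inr (Or.inl h2)
    · exact Or.inl h1
  clear hx
  simp only [IsPiece, puzzleBase, rot3, List.mem_cons, List.not_mem_nil, or_false,
    Prod.mk.injEq] at hp hq
  interval_cases v <;> interval_cases lm <;> interval_cases l <;>
    norm_num [gE, fE] at hq ⊢ <;> omega

lemma F2_le2 (c2 c1 m : ℕ) : F2 c2 c1 m ≤ 2 := by
  unfold F2; split_ifs <;> omega

lemma F2_mono (c2 c1 m : ℕ) : F2 c2 c1 (m+1) ≤ F2 c2 c1 m := by
  unfold F2; split_ifs <;> omega

lemma F2_nz (c2 c1 m : ℕ) (hc1 : 1 ≤ c1) (h : F2 c2 c1 m = 2) : F2 c2 c1 (m+1) ≠ 0 := by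
  unfold F2 at *; split_ifs at * <;> omega

lemma up_piece (l v : ℕ) (hl : l ≤ 2) (hv : v ≤ 2) : IsPiece (l, fE l v, gE l v) := by
  interval_cases l <;> interval_cases v <;> decide

set_option maxHeartbeats 1000000 in
lemma dn2 (c2 c1 k : ℕ) : IsPiece (gE (F2 (c2+1) c1 k) 2, F2 c2 c1 k, fE (F2 (c2+1) c1 (k+1)) 2) := by
  unfold F2 gE fE; split_ifs <;> first | exact (‹False›).elim | omega | decide

set_option maxHeartbeats 1000000 in
lemma dn1 (c2 c1 k : ℕ) : IsPiece (gE (F2 c2 (c1+1) k) 1, F2 c2 c1 k, fE (F2 c2 (c1+1) (k+1)) 1) := by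
  unfold F2 gE fE; split_ifs <;> first | exact (‹False›).elim | omega | decide

set_option maxHeartbeats 1000000 in
lemma dn0 (c2 c1 k : ℕ) : IsPiece (gE (F2 c2 c1 k) 0, F2 c2 c1 k, fE (F2 c2 c1 (k+1)) 0) := by
  unfold F2 gE fE; split_ifs <;> first | exact (‹False›).elim | omega | decide

lemma fE_self {l v : ℕ} (h : v ≤ l) : fE l v = v := by
  unfold fE; rw [if_neg (by omega)]

lemma gE_self {l v : ℕ} (h : l ≤ v) : gE l v = v := by
  unfold gE; rw [if_neg (by omega)]

/-! ### list facts -/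

lemma count_sum {l : List ℕ} (h : ∀ x ∈ l, x ≤ 2) :
    l.count 0 + l.count 1 + l.count 2 = l.length := by
  induction l with
  | nil => simp
  | cons a t ih =>
    have ha : a ≤ 2 := h a List.mem_cons_self
    have ih' := ih (fun x hx => h x (List.mem_cons_of_mem a hx))
    simp only [List.count_cons, List.length_cons, beq_iff_eq]
    interval_cases a <;> simp <;> omega

lemma drop_cons {u : List ℕ} {j n : ℕ} (hlen : u.length = n) (hj : j < n) :
    u.drop j = u.getD j 0 :: u.drop (j+1) := by
  have h : j < u.length := by omega
  rw [List.getD_eq_getElem u 0 h]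
  exact List.drop_eq_getElem_cons h

lemma count_drop_succ {u : List ℕ} {j n : ℕ} (hlen : u.length = n) (hj : j < n) (x : ℕ) :
    (u.drop j).count x = (u.drop (j+1)).count x + if u.getD j 0 = x then 1 else 0 := by
  rw [drop_cons hlen hj, List.count_cons]
  simp [beq_iff_eq]

lemma getD_le2 {u : List ℕ} {j n : ℕ} (hlen : u.length = n) (hu2 : ∀ x ∈ u, x ≤ 2)
    (hj : j < n) : u.getD j 0 ≤ 2 := by
  rw [List.getD_eq_getElem u 0 (by omega)]
  exact hu2 _ (List.getElem_mem _)

lemma count_self_drop {u : List ℕ} {j n : ℕ} (hlen : u.length = n) (hj : j < n) :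
    1 ≤ (u.drop j).count (u.getD j 0) := by
  rw [drop_cons hlen hj, List.count_cons]
  simp

/-! ### The constructed puzzle is a puzzle -/

lemma c_puzzle (n : ℕ) (u : List ℕ) (hlen : u.length = n) (hu2 : ∀ x ∈ u, x ≤ 2) :
    IsTriPuzzle n (cL u n) (cR u n) (cB u n) := by
  constructor
  · intro i j hji hin
    have hd : j ≤ i ∧ i < n := ⟨hji, hin⟩
    rw [cR_eq hd, cB_eq hd]
    exact up_piece _ _ (by rw [cL_eq hd]; exact F2_le2 _ _ _)
      (getD_le2 hlen hu2 (by omega))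
  · intro i j hji hin
    have hd1 : j ≤ i - 1 ∧ i - 1 < n := ⟨by omega, by omega⟩
    have hd2 : j + 1 ≤ i ∧ i < n := ⟨by omega, hin⟩
    have hd3 : j ≤ i ∧ i < n := ⟨by omega, hin⟩
    rw [cB_eq hd1, cR_eq hd3, cL_eq hd2, cL_eq hd1, cL_eq hd3]
    have hjn : j < n := by omega
    have e1 : i - 1 - j + 1 = i - j := by omega
    have e2 : i - (j + 1) = i - 1 - j := by omega
    have hv : u.getD j 0 = 0 ∨ u.getD j 0 = 1 ∨ u.getD j 0 = 2 := by
      have := getD_le2 hlen hu2 hjn; omega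
    have hc2 := count_drop_succ hlen hjn 2
    have hc1 := count_drop_succ hlen hjn 1
    rcases hv with hv | hv | hv <;> rw [hv] at hc2 hc1 ⊢ <;> norm_num at hc2 hc1 <;>
      rw [hc2, hc1, e2, ← e1]
    · exact dn0 ((u.drop (j+1)).count 2) ((u.drop (j+1)).count 1) (i - 1 - j)
    · exact dn1 ((u.drop (j+1)).count 2) ((u.drop (j+1)).count 1) (i - 1 - j)
    · exact dn2 ((u.drop (j+1)).count 2) ((u.drop (j+1)).count 1) (i - 1 - j)

lemma c_norm (n : ℕ) (u : List ℕ) : TriNormalized n (cL u n) (cR u n) (cB u n) := by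
  intro i j h
  exact ⟨if_neg h, if_neg h, if_neg h⟩

/-! ### Borders of the constructed puzzle -/

lemma idString_getElem {a b n i : ℕ} (hab : a ≤ b) (hbn : b ≤ n)
    (h : i < (idString a b n).length) :
    (idString a b n)[i] = if i < a then 0 else if i < b then 1 else 2 := by
  unfold idString at *
  simp only [List.getElem_append, List.length_append, List.length_replicate,
    List.getElem_replicate, dite_eq_ite] at *
  split_ifs <;> omega

lemma idString_length {a b n : ℕ} (hab : a ≤ b) (hbn : b ≤ n) :
    (idString a b n).length = n := by
  simp [idString]; omega

lemma c_left (n a b : ℕ) (u : List ℕ) (hab : a ≤ b) (hbn : b ≤ n)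
    (hu : Is012For a b n u) : triLeftCW n (cL u n) = idString a b n := by
  obtain ⟨hlen, h0, h1, h2, hle⟩ := hu
  apply List.ext_getElem (by simp [triLeftCW, idString_length hab hbn])
  intro i hi1 hi2
  have hin : i < n := by simpa [triLeftCW] using hi1
  rw [idString_getElem hab hbn]
  simp only [triLeftCW, List.getElem_ofFn]
  have hd : (0:ℕ) ≤ n - 1 - i ∧ n - 1 - i < n := ⟨Nat.zero_le _, by omega⟩
  rw [cL_eq hd]
  simp only [List.drop_zero, h1, h2, Nat.sub_zero]
  unfold F2; split_ifs <;> omega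

lemma cL_diag_ge (n : ℕ) (u : List ℕ) (hlen : u.length = n) (hu2 : ∀ x ∈ u, x ≤ 2)
    {i : ℕ} (hin : i < n) : u.getD i 0 ≤ cL u n i i := by
  have hd : i ≤ i ∧ i < n := ⟨le_refl _, hin⟩
  rw [cL_eq hd]
  have hv : u.getD i 0 ≤ 2 := getD_le2 hlen hu2 hin
  have hc := count_self_drop hlen hin
  have hv3 : u.getD i 0 = 0 ∨ u.getD i 0 = 1 ∨ u.getD i 0 = 2 := by omega
  rcases hv3 with hv' | hv' | hv' <;> rw [hv'] at hc ⊢ <;> unfold F2 <;>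
    simp only [Nat.sub_self] <;> split_ifs <;> omega

lemma cL_bot_le (n : ℕ) (u : List ℕ) (hlen : u.length = n) (hu2 : ∀ x ∈ u, x ≤ 2)
    {j : ℕ} (hjn : j < n) : cL u n (n-1) j ≤ u.getD j 0 := by
  have hd : j ≤ n - 1 ∧ n - 1 < n := ⟨by omega, by omega⟩
  rw [cL_eq hd]
  have hsum := count_sum (l := u.drop j) (fun x hx => hu2 x (List.mem_of_mem_drop hx))
  have hl : (u.drop j).length = n - j := by rw [List.length_drop, hlen]
  have hc := count_self_drop hlen hjn
  have hv : u.getD j 0 ≤ 2 := getD_le2 hlen hu2 hjn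
  have hv3 : u.getD j 0 = 0 ∨ u.getD j 0 = 1 ∨ u.getD j 0 = 2 := by omega
  rcases hv3 with hv' | hv' | hv' <;> rw [hv'] at hc ⊢ <;> unfold F2 <;>
    split_ifs <;> omega

lemma c_right (n : ℕ) (u : List ℕ) (hlen : u.length = n) (hu2 : ∀ x ∈ u, x ≤ 2) :
    triRightCW n (cR u n) = u := by
  apply List.ext_getElem (by simp [triRightCW, hlen])
  intro i hi1 hi2
  have hin : i < n := by simpa [triRightCW] using hi1
  simp only [triRightCW, List.getElem_ofFn]
  rw [cR_eq ⟨le_refl _, hin⟩, fE_self (cL_diag_ge n u hlen hu2 hin),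
    List.getD_eq_getElem u 0 (by omega)]

lemma c_bottom (n : ℕ) (u : List ℕ) (hlen : u.length = n) (hu2 : ∀ x ∈ u, x ≤ 2) :
    triBottomCCW n (cB u n) = u := by
  apply List.ext_getElem (by simp [triBottomCCW, hlen])
  intro j hj1 hj2
  have hjn : j < n := by simpa [triBottomCCW] using hj1
  simp only [triBottomCCW, List.getElem_ofFn]
  rw [cB_eq ⟨by omega, by omega⟩, gE_self (cL_bot_le n u hlen hu2 hjn),
    List.getD_eq_getElem u 0 (by omega)]

/-! ### Uniqueness -/

lemma main_uniq (n : ℕ) (u : List ℕ) (hlen : u.length = n) (hu2 : ∀ x ∈ u, x ≤ 2)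
    (L R B : ℕ → ℕ → ℕ) (hP : IsTriPuzzle n L R B)
    (hleft : ∀ i, i < n → L i 0 = cL u n i 0)
    (hright : ∀ i, i < n → R i i = u.getD i 0) :
    ∀ j i, j ≤ i → i < n → L i j = cL u n i j ∧ R i j = cR u n i j ∧ B i j = cB u n i j := by
  intro j
  induction j using Nat.strong_induction_on with
  | _ j IHj =>
    intro i
    induction i using Nat.strong_induction_on with
    | _ i IHi =>
      intro hji hin
      have hC := c_puzzle n u hlen hu2
      -- Step A : left edge
      have hL : L i j = cL u n i j := by
        rcases j with _ | k
        · exact hleft i hin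
        · have hk : k < i := by omega
          have h1 := (IHj k (by omega) (i-1) (by omega) (by omega)).2.2
          have h2 := (IHj k (by omega) i (by omega) hin).2.1
          have hq : IsPiece (B (i-1) k, L i (k+1), R i k) := hP.2 i k hk hin
          have hq' : IsPiece (cB u n (i-1) k, cL u n i (k+1), cR u n i k) :=
            hC.2 i k hk hin
          rw [h1, h2] at hq
          exact uniq2 hq hq'
      -- Step B : right edge
      have hdom : j ≤ i ∧ i < n := ⟨hji, hin⟩
      have hR : R i j = cR u n i j := by
        rcases Nat.eq_or_lt_of_le hji with heq | hlt
        · subst heq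
          rw [hright _ hin, cR_eq hdom, fE_self (cL_diag_ge n u hlen hu2 hin)]
        · -- i > j
          have hd1 : j ≤ i - 1 ∧ i - 1 < n := ⟨by omega, by omega⟩
          have hB1 := (IHi (i-1) (by omega) (by omega) (by omega)).2.2
          have hp : IsPiece (L i j, R i j, B i j) := hP.1 i j hji hin
          have hq : IsPiece (B (i-1) j, L i (j+1), R i j) := hP.2 i j hlt hin
          rw [hL] at hp
          rw [hB1, cB_eq hd1] at hq
          have hjn : j < n := by omega
          have e1 : i - 1 - j + 1 = i - j := by omega
          have hlm : cL u n (i-1) j ≤ 2 := by rw [cL_eq hd1]; exact F2_le2 _ _ _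
          have hll : cL u n i j ≤ cL u n (i-1) j := by
            rw [cL_eq hd1, cL_eq hdom, ← e1]; exact F2_mono _ _ _
          have hx : u.getD j 0 = 1 → cL u n (i-1) j = 2 → cL u n i j ≠ 0 := by
            intro hv1 h2'
            have hc := count_self_drop hlen hjn
            rw [hv1] at hc
            rw [cL_eq hd1] at h2'
            rw [cL_eq hdom, ← e1]
            exact F2_nz _ _ _ hc h2'
          have := stepdet hll hlm (getD_le2 hlen hu2 hjn) hx hp hq
          rw [cR_eq hdom]; exact this
      -- Step C : bottom edge
      have hB : B i j = cB u n i j := by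
        have hp : IsPiece (L i j, R i j, B i j) := hP.1 i j hji hin
        have hp' : IsPiece (cL u n i j, cR u n i j, cB u n i j) := hC.1 i j hji hin
        rw [hL, hR] at hp
        exact uniq3 hp hp'
      exact ⟨hL, hR, hB⟩

/-! ### Assembly -/

lemma set_eq (n a b : ℕ) (hab : a ≤ b) (hbn : b ≤ n)
    (u w : List ℕ) (hu : Is012For a b n u) (hw : Is012For a b n w) :
    { T : (ℕ → ℕ → ℕ) × (ℕ → ℕ → ℕ) × (ℕ → ℕ → ℕ) |
      IsTriPuzzle n T.1 T.2.1 T.2.2 ∧ TriNormalized n T.1 T.2.1 T.2.2 ∧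
      triLeftCW n T.1 = idString a b n ∧ triRightCW n T.2.1 = u ∧ triBottomCCW n T.2.2 = w }
    = if u = w then {(cL u n, cR u n, cB u n)} else ∅ := by
  obtain ⟨hlen, h0, h1, h2, hle⟩ := hu
  have key : ∀ T ∈ { T : (ℕ → ℕ → ℕ) × (ℕ → ℕ → ℕ) × (ℕ → ℕ → ℕ) |
      IsTriPuzzle n T.1 T.2.1 T.2.2 ∧ TriNormalized n T.1 T.2.1 T.2.2 ∧
      triLeftCW n T.1 = idString a b n ∧ triRightCW n T.2.1 = u ∧ triBottomCCW n T.2.2 = w },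
      T = (cL u n, cR u n, cB u n) ∧ u = w := by
    rintro ⟨TL, TR, TB⟩ ⟨hPz, hN, hl, hr, hb⟩
    simp only at hPz hN hl hr hb
    have hleq : triLeftCW n TL = triLeftCW n (cL u n) := by
      rw [hl, c_left n a b u hab hbn ⟨hlen, h0, h1, h2, hle⟩]
    have hleft : ∀ i, i < n → TL i 0 = cL u n i 0 := by
      intro i hi
      have hk : n - 1 - i < n := by omega
      have := congrArg (fun l => l.getD (n-1-i) 0) hleq
      simp only [triLeftCW] at this
      rw [List.getD_eq_getElem _ 0 (by simpa using hk),
        List.getD_eq_getElem _ 0 (by simpa using hk)] at this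
      simpa [List.getElem_ofFn, show n - 1 - (n-1-i) = i by omega] using this
    have hright : ∀ i, i < n → TR i i = u.getD i 0 := by
      intro i hi
      have := congrArg (fun l => l.getD i 0) hr
      simp only [triRightCW] at this
      rw [List.getD_eq_getElem _ 0 (by simpa using hi)] at this
      simpa [List.getElem_ofFn] using this
    have huniq := main_uniq n u hlen hle TL TR TB hPz hleft hright
    have hTL : TL = cL u n := by
      funext i j
      by_cases hd : j ≤ i ∧ i < n
      · exact (huniq j i hd.1 hd.2).1
      · rw [(hN i j hd).1, cL, if_neg hd]
    have hTR : TR = cR u n := by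
      funext i j
      by_cases hd : j ≤ i ∧ i < n
      · exact (huniq j i hd.1 hd.2).2.1
      · rw [(hN i j hd).2.1, cR, if_neg hd]
    have hTB : TB = cB u n := by
      funext i j
      by_cases hd : j ≤ i ∧ i < n
      · exact (huniq j i hd.1 hd.2).2.2
      · rw [(hN i j hd).2.2, cB, if_neg hd]
    refine ⟨by rw [hTL, hTR, hTB], ?_⟩
    rw [← hb, hTB, c_bottom n u hlen hle]
  by_cases huw : u = w
  · rw [if_pos huw]
    apply Set.eq_singleton_iff_unique_mem.mpr
    constructor
    · refine ⟨c_puzzle n u hlen hle, c_norm n u, ?_, ?_, ?_⟩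
      · exact c_left n a b u hab hbn ⟨hlen, h0, h1, h2, hle⟩
      · exact c_right n u hlen hle
      · rw [← huw]; exact c_bottom n u hlen hle
    · intro T hT; exact (key T hT).1
  · rw [if_neg huw]
    apply Set.eq_empty_iff_forall_notMem.mpr
    intro T hT
    exact huw (key T hT).2

/-- Multiplication by one: C^w_{𝟎,u} = δ_{u,w}. -/
theorem puzzleCount_identity (n a b : ℕ) (hab : a ≤ b) (hbn : b ≤ n)
    (u w : List ℕ) (hu : Is012For a b n u) (hw : Is012For a b n w) :
    puzzleCount n (idString a b n) u w = if u = w then 1 else 0 := by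
  rw [puzzleCount, set_eq n a b hab hbn u w hu hw]
  by_cases huw : u = w
  · rw [if_pos huw, if_pos huw, Set.ncard_singleton]
  · rw [if_neg huw, if_neg huw, Set.ncard_empty]
end

section
/- In the proof of the uniqueness of row fillings: a single row of puzzle pieces whose bottom border is an identity string (0^{n₀},1^{n₁},2^{n₂}) read right-to-left and whose left border label is 0 must be tiled, from left to right, by exactly the following pieces: the rhombus with left/right labels 0 and top/bottom labels 2 above each bottom 2; the rhombus with left/right labels 0 and top/bottom labels 1 above each bottom 1; exactly one upward triangle with all labels 0 (above the first bottom 0); and rhombi with all labels 0 above the remaining bottom 0s. In particular the tiling exists and is unique. -/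
/-- getD of a triple concatenation of replicates. -/
lemma getD_rep3 (a b c n₂ n₁ n₀ j : ℕ) :
    (List.replicate n₂ a ++ List.replicate n₁ b ++ List.replicate n₀ c).getD j 8 =
    if j < n₂ then a else if j < n₂+n₁ then b else if j < n₂+n₁+n₀ then c else 8 := by
  simp [List.getD, List.getElem?_append, List.getElem?_replicate]
  split_ifs <;> simp_all <;> omega

lemma getD_rep0 (m j : ℕ) (hj : j < m) : (List.replicate m (0:ℕ)).getD j 8 = 0 := by
  simp [List.getD, List.getElem?_replicate, hj]

lemma pstep2 (r t l : ℕ) (h1 : IsPiece (0,r,2)) (h2 : IsPiece (t,l,r)) :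
    r = 5 ∧ t = 2 ∧ l = 0 := by
  simp [IsPiece, puzzleBase, rot3, Prod.ext_iff] at h1 h2; omega

lemma pstep1 (r t l r' b : ℕ) (hb : b = 0 ∨ b = 1) (h1 : IsPiece (0,r,1))
    (h2 : IsPiece (t,l,r)) (h3 : IsPiece (l,r',b)) : r = 3 ∧ t = 1 ∧ l = 0 := by
  simp [IsPiece, puzzleBase, rot3, Prod.ext_iff] at h1 h2 h3; omega

lemma pstep0 (r t l r' : ℕ) (h1 : IsPiece (0,r,0)) (h2 : IsPiece (t,l,r))
    (h3 : IsPiece (l,r',0)) : r = 0 ∧ t = 0 ∧ l = 0 := by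
  simp [IsPiece, puzzleBase, rot3, Prod.ext_iff] at h1 h2 h3; omega

lemma pup2 (r : ℕ) (h1 : IsPiece (0,r,2)) : r = 5 := by
  simp [IsPiece, puzzleBase, rot3, Prod.ext_iff] at h1; omega

lemma pup1 (r : ℕ) (h1 : IsPiece (0,r,1)) : r = 3 := by
  simp [IsPiece, puzzleBase, rot3, Prod.ext_iff] at h1; omega

lemma pup0 (r : ℕ) (h1 : IsPiece (0,r,0)) : r = 0 := by
  simp [IsPiece, puzzleBase, rot3, Prod.ext_iff] at h1; omega

/-- The unique filling of a row with left label 0 and bottom an identity string read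
right-to-left: rhombi with sides (0,2)-labels above the 2s, rhombi with (0,1)-labels
above the 1s, one all-0 triangle above the first 0, and all-0 rhombi above the rest. -/
theorem row_filling_zero (n₀ n₁ n₂ : ℕ) (h : 1 ≤ n₀) :
    IsRow (List.replicate (n₂ + n₁ + n₀) 0)
      (List.replicate n₂ 5 ++ List.replicate n₁ 3 ++ List.replicate n₀ 0)
      (List.replicate n₂ 2 ++ List.replicate n₁ 1 ++ List.replicate (n₀ - 1) 0)
      (List.replicate n₂ 2 ++ List.replicate n₁ 1 ++ List.replicate n₀ 0) ∧
    (List.replicate (n₂ + n₁ + n₀) 0).getD 0 8 = 0 ∧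
    (∀ lfts rgts tops,
      IsRow lfts rgts tops
        (List.replicate n₂ 2 ++ List.replicate n₁ 1 ++ List.replicate n₀ 0) →
      lfts.getD 0 8 = 0 →
      lfts = List.replicate (n₂ + n₁ + n₀) 0 ∧
      rgts = List.replicate n₂ 5 ++ List.replicate n₁ 3 ++ List.replicate n₀ 0 ∧
      tops = List.replicate n₂ 2 ++ List.replicate n₁ 1 ++ List.replicate (n₀ - 1) 0) := by
  set m := n₂ + n₁ + n₀ with hm
  refine ⟨⟨by simp [hm]; omega, by simp [hm]; omega, by simp [hm]; omega, ?_, ?_⟩, ?_, ?_⟩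
  · -- up pieces of the explicit filling
    intro j hj
    simp only [List.length_replicate] at hj
    rw [getD_rep0 _ _ hj, getD_rep3, getD_rep3]
    rcases Nat.lt_or_ge j n₂ with h2 | h2
    · simp only [if_pos h2]; unfold IsPiece; decide
    · rcases Nat.lt_or_ge j (n₂+n₁) with h1 | h1
      · simp only [if_neg (by omega : ¬ j < n₂), if_pos h1]; unfold IsPiece; decide
      · simp only [if_neg (by omega : ¬ j < n₂), if_neg (by omega : ¬ j < n₂+n₁),
          if_pos (by omega : j < n₂+n₁+n₀)]; unfold IsPiece; decide
  · -- down pieces of the explicit filling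
    intro j hj
    simp only [List.length_replicate] at hj
    rw [getD_rep0 _ _ (by omega), getD_rep3, getD_rep3]
    rcases Nat.lt_or_ge j n₂ with h2 | h2
    · simp only [if_pos h2]; unfold IsPiece; decide
    · rcases Nat.lt_or_ge j (n₂+n₁) with h1 | h1
      · simp only [if_neg (by omega : ¬ j < n₂), if_pos h1]; unfold IsPiece; decide
      · simp only [if_neg (by omega : ¬ j < n₂), if_neg (by omega : ¬ j < n₂+n₁),
          if_pos (by omega : j < n₂+n₁+(n₀-1)), if_pos (by omega : j < n₂+n₁+n₀)]
        unfold IsPiece; decide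
  · exact getD_rep0 _ _ (by omega)
  · -- uniqueness
    intro lfts rgts tops hR hl0
    obtain ⟨hrl, hbl, htl, hup, hdn⟩ := hR
    have hbl' : (List.replicate n₂ 2 ++ List.replicate n₁ 1 ++
        List.replicate n₀ 0).length = m := by simp [hm]; omega
    have hL : lfts.length = m := by omega
    rw [hL] at hup hdn
    -- bottom values
    have hbot : ∀ j, j < m → (List.replicate n₂ 2 ++ List.replicate n₁ 1 ++
        List.replicate n₀ 0).getD j 8 =
        if j < n₂ then 2 else if j < n₂+n₁ then 1 else 0 := by
      intro j hj
      rw [getD_rep3]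
      split_ifs <;> omega
    -- all left labels are 0
    have L : ∀ j, j < m → lfts.getD j 8 = 0 := by
      intro j
      induction j with
      | zero => intro _; exact hl0
      | succ j ih =>
        intro hj1
        have hj : j < m := by omega
        have h0 := ih hj
        have hu := hup j hj
        rw [h0, hbot j hj] at hu
        have hd := hdn j hj1
        rcases Nat.lt_or_ge j n₂ with h2 | h2
        · rw [if_pos h2] at hu
          exact (pstep2 _ _ _ hu hd).2.2
        · rcases Nat.lt_or_ge j (n₂+n₁) with h1 | h1
          · rw [if_neg (by omega), if_pos h1] at hu
            have hu' := hup (j+1) hj1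
            rw [hbot (j+1) hj1] at hu'
            have hb : (if j+1 < n₂ then 2 else if j+1 < n₂+n₁ then 1 else 0) = 0 ∨
                (if j+1 < n₂ then 2 else if j+1 < n₂+n₁ then 1 else 0) = 1 := by
              split_ifs <;> omega
            exact (pstep1 _ _ _ _ _ hb hu hd hu').2.2
          · rw [if_neg (by omega), if_neg (by omega)] at hu
            have hu' := hup (j+1) hj1
            rw [hbot (j+1) hj1, if_neg (by omega), if_neg (by omega)] at hu'
            exact (pstep0 _ _ _ _ hu hd hu').2.2
    -- right labels
    have R : ∀ j, j < m → rgts.getD j 8 =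
        if j < n₂ then 5 else if j < n₂+n₁ then 3 else 0 := by
      intro j hj
      have hu := hup j hj
      rw [L j hj, hbot j hj] at hu
      split_ifs with a b
      · rw [if_pos a] at hu; exact pup2 _ hu
      · rw [if_neg a, if_pos b] at hu; exact pup1 _ hu
      · rw [if_neg a, if_neg b] at hu; exact pup0 _ hu
    -- top labels
    have T : ∀ j, j + 1 < m → tops.getD j 8 =
        if j < n₂ then 2 else if j < n₂+n₁ then 1 else 0 := by
      intro j hj1
      have hj : j < m := by omega
      have hu := hup j hj
      rw [L j hj, hbot j hj] at hu
      have hd := hdn j hj1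
      split_ifs with a b
      · rw [if_pos a] at hu; exact (pstep2 _ _ _ hu hd).2.1
      · rw [if_neg a, if_pos b] at hu
        have hu' := hup (j+1) hj1
        rw [hbot (j+1) hj1] at hu'
        have hb : (if j+1 < n₂ then 2 else if j+1 < n₂+n₁ then 1 else 0) = 0 ∨
            (if j+1 < n₂ then 2 else if j+1 < n₂+n₁ then 1 else 0) = 1 := by
          split_ifs <;> omega
        exact (pstep1 _ _ _ _ _ hb hu hd hu').2.1
      · rw [if_neg a, if_neg b] at hu
        have hu' := hup (j+1) hj1
        rw [hbot (j+1) hj1, if_neg (by omega), if_neg (by omega)] at hu'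
        exact (pstep0 _ _ _ _ hu hd hu').2.1
    refine ⟨?_, ?_, ?_⟩
    · apply List.ext_getElem (by simp [hL, hm])
      intro i h1 h2
      rw [← List.getD_eq_getElem lfts 8 h1, ← List.getD_eq_getElem _ 8 h2,
        L i (by omega), getD_rep0 _ _ (by simpa using h2)]
    · apply List.ext_getElem (by simp [hrl, hL, hm]; omega)
      intro i h1 h2
      rw [← List.getD_eq_getElem rgts 8 h1, ← List.getD_eq_getElem _ 8 h2,
        R i (by omega), getD_rep3]
      have : i < n₂ + n₁ + n₀ := by omega
      split_ifs <;> omega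
    · apply List.ext_getElem (by simp [hL, hm] at htl ⊢; omega)
      intro i h1 h2
      have him : i + 1 < m := by omega
      rw [← List.getD_eq_getElem tops 8 h1, ← List.getD_eq_getElem _ 8 h2,
        T i him, getD_rep3]
      simp only [List.length_append, List.length_replicate] at h2
      split_ifs <;> omega
end
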